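/- Let d ≥ 1 and ε > 0. Define y : ℝ^d → ℝ^d by y(x) = x / √((1/d)‖x‖₂² + ε). Then y is globally Lipschitz continuous with Lipschitz constant 1/√ε: for all x₁, x₂ ∈ ℝ^d, ‖y(x₁) − y(x₂)‖₂ ≤ (1/√ε) · ‖x₁ − x₂‖₂. -/

import Mathlib

set_option maxHeartbeats 1000000 in
lemma rms_scalar_key (ε c n₁ n₂ s r₁ r₂ : ℝ) (hε : 0 < ε) (hc : 0 ≤ c)
    (hn₁ : 0 ≤ n₁) (hn₂ : 0 ≤ n₂) (hcs : s ≤ n₁ * n₂)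
    (h1 : r₁ ^ 2 = c * n₁ ^ 2 + ε) (h2 : r₂ ^ 2 = c * n₂ ^ 2 + ε)
    (hr₁ : 0 < r₁) (hr₂ : 0 < r₂) :
    r₁⁻¹ ^ 2 * n₁ ^ 2 + r₂⁻¹ ^ 2 * n₂ ^ 2 - 2 * (r₁⁻¹ * r₂⁻¹ * s)
      ≤ (1 / ε) * (n₁ ^ 2 + n₂ ^ 2 - 2 * s) := by
  have hεs : 0 < Real.sqrt ε := Real.sqrt_pos.mpr hε
  have hεsq : Real.sqrt ε ^ 2 = ε := Real.sq_sqrt hε.le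
  have hr₁ge : Real.sqrt ε ≤ r₁ := by
    nlinarith [sq_nonneg (r₁ - Real.sqrt ε), mul_nonneg hc (sq_nonneg n₁)]
  have hr₂ge : Real.sqrt ε ≤ r₂ := by
    nlinarith [sq_nonneg (r₂ - Real.sqrt ε), mul_nonneg hc (sq_nonneg n₂)]
  have hεr : ε ≤ r₁ * r₂ := by nlinarith
  have hstep : ε * (n₁ * r₂ - n₂ * r₁) ^ 2 ≤ r₁ ^ 2 * r₂ ^ 2 * (n₁ - n₂) ^ 2 := by
    rcases (add_nonneg hn₁ hn₂).eq_or_lt with h0 | h0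
    · have hn1 : n₁ = 0 := by linarith
      have hn2 : n₂ = 0 := by linarith
      simp [hn1, hn2]
    · set B := n₁ * r₂ + n₂ * r₁ with hB
      have hBpos : 0 < B := by
        rcases lt_or_ge 0 n₁ with h | h
        · have : 0 < n₁ * r₂ := mul_pos h hr₂
          nlinarith [mul_nonneg hn₂ hr₁.le]
        · have hn1 : n₁ = 0 := le_antisymm h hn₁
          have : 0 < n₂ := by simpa [hn1] using h0
          have : 0 < n₂ * r₁ := mul_pos this hr₁
          simp [hB, hn1]; nlinarith
      have hcross : (n₁ * r₂ - n₂ * r₁) * B = ε * (n₁ ^ 2 - n₂ ^ 2) := by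
        have : (n₁ * r₂ - n₂ * r₁) * (n₁ * r₂ + n₂ * r₁) = n₁^2 * r₂^2 - n₂^2 * r₁^2 := by ring
        rw [hB, this, h1, h2]; ring
      have hBsq : ε * (n₁ + n₂) ^ 2 ≤ B ^ 2 := by
        have hsum : Real.sqrt ε * (n₁ + n₂) ≤ B := by nlinarith
        nlinarith [mul_nonneg hεs.le (add_nonneg hn₁ hn₂)]
      have hmain : ε * (n₁ * r₂ - n₂ * r₁) ^ 2 * B ^ 2
          ≤ r₁ ^ 2 * r₂ ^ 2 * (n₁ - n₂) ^ 2 * B ^ 2 := by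
        have hL : ε * (n₁ * r₂ - n₂ * r₁) ^ 2 * B ^ 2 = ε^3 * (n₁+n₂)^2 * (n₁-n₂)^2 := by
          have : (n₁ * r₂ - n₂ * r₁) ^ 2 * B ^ 2 = ((n₁ * r₂ - n₂ * r₁) * B)^2 := by ring
          rw [mul_assoc, this, hcross]; ring
        rw [hL]
        have h3 : ε^2 ≤ r₁^2 * r₂^2 := by nlinarith
        have h4 : ε^2 * (ε * (n₁+n₂)^2) * (n₁-n₂)^2
            ≤ (r₁^2 * r₂^2) * B^2 * (n₁-n₂)^2 :=
          mul_le_mul_of_nonneg_right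
            (mul_le_mul h3 hBsq (by positivity) (by positivity)) (sq_nonneg _)
        calc ε^3 * (n₁+n₂)^2 * (n₁-n₂)^2
            = ε^2 * (ε * (n₁+n₂)^2) * (n₁-n₂)^2 := by ring
          _ ≤ (r₁^2 * r₂^2) * B^2 * (n₁-n₂)^2 := h4
          _ = r₁ ^ 2 * r₂ ^ 2 * (n₁ - n₂) ^ 2 * B ^ 2 := by ring
      exact le_of_mul_le_mul_right hmain (by positivity)
  have key : ε * (r₂ ^ 2 * n₁ ^ 2 + r₁ ^ 2 * n₂ ^ 2 - 2 * (r₁ * r₂ * s))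
      ≤ r₁ ^ 2 * r₂ ^ 2 * (n₁ ^ 2 + n₂ ^ 2 - 2 * s) := by
    nlinarith [mul_nonneg (sub_nonneg.mpr hεr) (sub_nonneg.mpr hcs),
      mul_pos hr₁ hr₂]
  rw [← sub_nonneg]
  have hrw : (1 / ε) * (n₁ ^ 2 + n₂ ^ 2 - 2 * s)
      - (r₁⁻¹ ^ 2 * n₁ ^ 2 + r₂⁻¹ ^ 2 * n₂ ^ 2 - 2 * (r₁⁻¹ * r₂⁻¹ * s))
      = (r₁ ^ 2 * r₂ ^ 2 * (n₁ ^ 2 + n₂ ^ 2 - 2 * s)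
        - ε * (r₂ ^ 2 * n₁ ^ 2 + r₁ ^ 2 * n₂ ^ 2 - 2 * (r₁ * r₂ * s)))
        / (ε * r₁ ^ 2 * r₂ ^ 2) := by
    field_simp
  rw [hrw]
  apply div_nonneg (by linarith) (by positivity)

/-- The unscaled RMS-normalization map `y(x) = x / √((1/d)‖x‖₂² + ε)` is globally
Lipschitz continuous with constant `1/√ε`. -/
theorem rms_unscaled_lipschitz (d : ℕ) (hd : 1 ≤ d) (ε : ℝ) (hε : 0 < ε)
    (y : EuclideanSpace ℝ (Fin d) → EuclideanSpace ℝ (Fin d))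
    (hy : ∀ x : EuclideanSpace ℝ (Fin d),
      y x = (Real.sqrt ((1 / (d : ℝ)) * ‖x‖ ^ 2 + ε))⁻¹ • x)
    (x₁ x₂ : EuclideanSpace ℝ (Fin d)) :
    ‖y x₁ - y x₂‖ ≤ (1 / Real.sqrt ε) * ‖x₁ - x₂‖ := by
  have hc : (0:ℝ) ≤ 1 / (d:ℝ) := by positivity
  have h1 : (0:ℝ) < (1 / (d:ℝ)) * ‖x₁‖ ^ 2 + ε := by positivity
  have h2 : (0:ℝ) < (1 / (d:ℝ)) * ‖x₂‖ ^ 2 + ε := by positivity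
  have hr₁pos : 0 < Real.sqrt ((1 / (d:ℝ)) * ‖x₁‖ ^ 2 + ε) := Real.sqrt_pos.mpr h1
  have hr₂pos : 0 < Real.sqrt ((1 / (d:ℝ)) * ‖x₂‖ ^ 2 + ε) := Real.sqrt_pos.mpr h2
  have hr₁sq : Real.sqrt ((1 / (d:ℝ)) * ‖x₁‖ ^ 2 + ε) ^ 2
      = (1 / (d:ℝ)) * ‖x₁‖ ^ 2 + ε := Real.sq_sqrt h1.le
  have hr₂sq : Real.sqrt ((1 / (d:ℝ)) * ‖x₂‖ ^ 2 + ε) ^ 2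
      = (1 / (d:ℝ)) * ‖x₂‖ ^ 2 + ε := Real.sq_sqrt h2.le
  have hεs : 0 < Real.sqrt ε := Real.sqrt_pos.mpr hε
  have hεsq : Real.sqrt ε ^ 2 = ε := Real.sq_sqrt hε.le
  rw [hy x₁, hy x₂]
  apply le_of_pow_le_pow_left₀ two_ne_zero (by positivity)
  have hcs : (inner ℝ x₁ x₂ : ℝ) ≤ ‖x₁‖ * ‖x₂‖ := real_inner_le_norm x₁ x₂
  have e1 : ‖(Real.sqrt ((1 / (d:ℝ)) * ‖x₁‖ ^ 2 + ε))⁻¹ • x₁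
      - (Real.sqrt ((1 / (d:ℝ)) * ‖x₂‖ ^ 2 + ε))⁻¹ • x₂‖ ^ 2
      = (Real.sqrt ((1 / (d:ℝ)) * ‖x₁‖ ^ 2 + ε))⁻¹ ^ 2 * ‖x₁‖ ^ 2
        + (Real.sqrt ((1 / (d:ℝ)) * ‖x₂‖ ^ 2 + ε))⁻¹ ^ 2 * ‖x₂‖ ^ 2
        - 2 * ((Real.sqrt ((1 / (d:ℝ)) * ‖x₁‖ ^ 2 + ε))⁻¹
            * (Real.sqrt ((1 / (d:ℝ)) * ‖x₂‖ ^ 2 + ε))⁻¹ * (inner ℝ x₁ x₂ : ℝ)) := by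
    rw [norm_sub_sq_real, real_inner_smul_left, real_inner_smul_right,
      norm_smul, norm_smul, Real.norm_eq_abs, Real.norm_eq_abs,
      abs_of_pos (by positivity), abs_of_pos (by positivity)]
    ring
  have e2 : ((1 / Real.sqrt ε) * ‖x₁ - x₂‖) ^ 2
      = (1 / ε) * (‖x₁‖ ^ 2 + ‖x₂‖ ^ 2 - 2 * (inner ℝ x₁ x₂ : ℝ)) := by
    rw [mul_pow, norm_sub_sq_real, div_pow, one_pow, hεsq]
    ring
  rw [e1, e2]
  exact rms_scalar_key ε (1 / (d:ℝ)) ‖x₁‖ ‖x₂‖ (inner ℝ x₁ x₂) _ _ hε hc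
    (norm_nonneg _) (norm_nonneg _) hcs hr₁sq hr₂sq hr₁pos hr₂pos
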